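/- On the Cartesian torus grid, let κ > 0, Δt > 0, and let B satisfy hypothesis (H2). Suppose u^{k−1}_i : G → [0,∞), u^k_i : G → (0,∞) and p^k_i : G → ℝ (i = 1,…,n) satisfy one implicit Euler finite-volume step with prescribed potentials. Then the discrete Boltzmann entropy inequality holds: (1/Δt)·(H_B(u^k) − H_B(u^{k−1})) + P_B(u^k, p^k) ≤ −X(u^k, p^k). -/

import Mathlib

open MeasureTheory Real Finset

namespace SG

instance : Fact ((0:ℝ) < 1) := ⟨one_pos⟩

variable {d : ℕ}

/-- Cells of the Cartesian torus grid. -/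
abbrev Cell (M : Fin d → ℕ) := ∀ ℓ : Fin d, ZMod (M ℓ)

/-- Cell measure `m(K) = Δx₁⋯Δx_d`. -/
noncomputable def mK (M : Fin d → ℕ) : ℝ := ∏ ℓ, ((M ℓ : ℝ))⁻¹

/-- Transmissibility coefficient of an edge in direction `ℓ`:
`τ_σ = m(σ)/d_σ = m(K)·M_ℓ²`. -/
noncomputable def τ (M : Fin d → ℕ) (ℓ : Fin d) : ℝ := mK M * (M ℓ : ℝ) ^ 2

/-- Shift a cell by `s` in direction `ℓ` (mod `M ℓ`). -/
def shift (M : Fin d → ℕ) (K : Cell M) (ℓ : Fin d) (s : ℤ) : Cell M :=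
  Function.update K ℓ (K ℓ + (s : ZMod (M ℓ)))

/-- Hypothesis (H2): `B` is continuous on `[0,∞)` with `0 < B(s) ≤ 1` for `s ≥ 0`. -/
def H2 (B : ℝ → ℝ) : Prop :=
  ContinuousOn B (Set.Ici 0) ∧ ∀ s : ℝ, 0 ≤ s → 0 < B s ∧ B s ≤ 1

/-- Hypothesis (H3): `α ∈ [0,1)` and `B(s) ≥ 1 − α·s` for all `s ≥ 0`. -/
def H3 (B : ℝ → ℝ) (α : ℝ) : Prop :=
  0 ≤ α ∧ α < 1 ∧ ∀ s : ℝ, 0 ≤ s → 1 - α * s ≤ B s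

/-- The scaled weight function `B_κ(s) = κ·B(s/κ)`. -/
noncomputable def Bk (κ : ℝ) (B : ℝ → ℝ) (s : ℝ) : ℝ := κ * B (s / κ)

/-- Upwind value on the (oriented) edge from `K` to `L`. -/
noncomputable def upw {M : Fin d → ℕ} (u p : Cell M → ℝ) (K L : Cell M) : ℝ :=
  if 0 ≤ p L - p K then u L else u K

/-- Numerical flux `F_{K,σ}[u,p]` from `K` through the edge (in direction `ℓ`) to its
neighbor `L`. -/
noncomputable def flux (M : Fin d → ℕ) (κ : ℝ) (B : ℝ → ℝ) (u p : Cell M → ℝ)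
    (ℓ : Fin d) (K L : Cell M) : ℝ :=
  -(τ M ℓ) * (Bk κ B |p L - p K| * (u L - u K) + upw u p K L * (p L - p K))

/-- Sum of the numerical fluxes over the `2d` edges incident to `K`. -/
noncomputable def fluxSum (M : Fin d → ℕ) (κ : ℝ) (B : ℝ → ℝ) (u p : Cell M → ℝ)
    (K : Cell M) : ℝ :=
  ∑ ℓ : Fin d, (flux M κ B u p ℓ K (shift M K ℓ 1) + flux M κ B u p ℓ K (shift M K ℓ (-1)))

/-- One implicit Euler finite-volume step with prescribed potential `p`. -/
def Step (M : Fin d → ℕ) (κ Δt : ℝ) (B : ℝ → ℝ) (uPrev u p : Cell M → ℝ) : Prop :=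
  ∀ K : Cell M, mK M * (u K - uPrev K) / Δt + fluxSum M κ B u p K = 0

/-- Discrete Boltzmann entropy. -/
noncomputable def HB (M : Fin d → ℕ) [∀ ℓ, NeZero (M ℓ)] {n : ℕ}
    (u : Fin n → Cell M → ℝ) : ℝ :=
  ∑ i, ∑ K : Cell M, mK M * (u i K * (Real.log (u i K) - 1))

/-- Discrete Rao entropy associated to discrete kernels `Wd`. -/
noncomputable def HR (M : Fin d → ℕ) [∀ ℓ, NeZero (M ℓ)] {n : ℕ}
    (Wd : Fin n → Fin n → Cell M → Cell M → ℝ) (u : Fin n → Cell M → ℝ) : ℝ :=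
  (1/2) * ∑ i, ∑ j, ∑ K : Cell M, ∑ J : Cell M,
    mK M * mK M * Wd i j K J * u i K * u j J

/-- Boltzmann entropy production term `P_B`. -/
noncomputable def PB (M : Fin d → ℕ) [∀ ℓ, NeZero (M ℓ)] {n : ℕ} (κ : ℝ) (B : ℝ → ℝ)
    (u p : Fin n → Cell M → ℝ) : ℝ :=
  4 * ∑ i, ∑ K : Cell M, ∑ ℓ : Fin d,
    τ M ℓ * Bk κ B |p i (shift M K ℓ 1) - p i K| *
      (Real.sqrt (u i (shift M K ℓ 1)) - Real.sqrt (u i K)) ^ 2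

/-- Rao entropy production term `P_R`. -/
noncomputable def PR (M : Fin d → ℕ) [∀ ℓ, NeZero (M ℓ)] {n : ℕ}
    (u p : Fin n → Cell M → ℝ) : ℝ :=
  ∑ i, ∑ K : Cell M, ∑ ℓ : Fin d,
    τ M ℓ * upw (u i) (p i) K (shift M K ℓ 1) * (p i (shift M K ℓ 1) - p i K) ^ 2

/-- Cross term `X(u,p)`. -/
noncomputable def Xc (M : Fin d → ℕ) [∀ ℓ, NeZero (M ℓ)] {n : ℕ}
    (u p : Fin n → Cell M → ℝ) : ℝ :=
  ∑ i, ∑ K : Cell M, ∑ ℓ : Fin d,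
    τ M ℓ * (p i (shift M K ℓ 1) - p i K) * (u i (shift M K ℓ 1) - u i K)

/-- Discrete Fisher information `∑_i ∑_σ τ_σ |D_σ √u_i|²`. -/
noncomputable def Fisher (M : Fin d → ℕ) [∀ ℓ, NeZero (M ℓ)] {n : ℕ}
    (u : Fin n → Cell M → ℝ) : ℝ :=
  ∑ i, ∑ K : Cell M, ∑ ℓ : Fin d,
    τ M ℓ * (Real.sqrt (u i (shift M K ℓ 1)) - Real.sqrt (u i K)) ^ 2

/-- The torus `T^d = (ℝ/ℤ)^d`. -/
abbrev Td (d : ℕ) := Fin d → AddCircle (1 : ℝ)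

/-- The box `Q_K ⊆ T^d` corresponding to the cell `K`. -/
noncomputable def QK (M : Fin d → ℕ) (K : Cell M) : Set (Td d) :=
  Set.univ.pi fun ℓ => (fun t : ℝ => (t : AddCircle (1 : ℝ))) ''
    Set.Ico (((K ℓ).val : ℝ) / (M ℓ)) ((((K ℓ).val : ℝ) + 1) / (M ℓ))

/-- The discrete kernel `W_{KJ} = (m(K)m(J))⁻¹ ∫_{Q_K}∫_{Q_J} W(x−y) dy dx`. -/
noncomputable def Wdisc (M : Fin d → ℕ) (W : Td d → ℝ) (K J : Cell M) : ℝ :=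
  (mK M * mK M)⁻¹ * ∫ x in QK M K, ∫ y in QK M J, W (x - y)

/-- The discrete nonlocal potential `p_i(K) = ∑_j ∑_J m(J)·Wd^{ij}_{KJ}·u_j(J)`. -/
noncomputable def pot (M : Fin d → ℕ) [∀ ℓ, NeZero (M ℓ)] {n : ℕ}
    (Wd : Fin n → Fin n → Cell M → Cell M → ℝ) (u : Fin n → Cell M → ℝ)
    (i : Fin n) (K : Cell M) : ℝ :=
  ∑ j, ∑ J : Cell M, mK M * Wd i j K J * u j J

/-- Discrete `L^q` norm of a cell function. -/
noncomputable def normq (M : Fin d → ℕ) [∀ ℓ, NeZero (M ℓ)] (q : ℝ)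
    (u : Cell M → ℝ) : ℝ :=
  (∑ K : Cell M, mK M * |u K| ^ q) ^ (1/q)

/-- Discrete `L^q` norm of an edge function (dual-cell measure `m(Δ_σ) = m(σ)·d_σ = m(K)`). -/
noncomputable def enorm (M : Fin d → ℕ) [∀ ℓ, NeZero (M ℓ)] (q : ℝ)
    (w : Cell M → Fin d → ℝ) : ℝ :=
  (∑ K : Cell M, ∑ ℓ : Fin d, mK M * |w K ℓ| ^ q) ^ (1/q)

/-- Magnitude of the discrete gradient on the edge `(K,ℓ)`:
`|∇^h_σ v| = d·D_σ v/d_σ`. -/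
noncomputable def gradh (M : Fin d → ℕ) (v : Cell M → ℝ) (K : Cell M) (ℓ : Fin d) : ℝ :=
  d * (M ℓ : ℝ) * |v (shift M K ℓ 1) - v K|



section Aux

lemma aux_mono : MonotoneOn (fun t : ℝ => (t+1) * Real.log t - 2*(t-1)) (Set.Ici 1) := by
  have hd : ∀ t : ℝ, 0 < t → HasDerivAt (fun t : ℝ => (t+1) * Real.log t - 2*(t-1))
      (Real.log t + (t+1) * t⁻¹ - 2) t := by
    intro t ht
    have h1 : HasDerivAt (fun t : ℝ => t + 1) 1 t := (hasDerivAt_id t).add_const 1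
    have h2 := Real.hasDerivAt_log (ne_of_gt ht)
    have h3 := h1.mul h2
    have h4 : HasDerivAt (fun t : ℝ => 2*(t-1)) 2 t := by
      simpa using ((hasDerivAt_id t).sub_const 1).const_mul 2
    refine (h3.sub h4 : HasDerivAt (fun t : ℝ => (t+1) * Real.log t - 2*(t-1)) _ t).congr_deriv ?_
    ring
  apply monotoneOn_of_deriv_nonneg (convex_Ici 1)
  · apply ContinuousOn.sub
    · exact (continuousOn_id.add continuousOn_const).mul
        (Real.continuousOn_log.mono (by intro x hx; simp at hx ⊢; linarith))
    · fun_prop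
  · intro t ht
    rw [interior_Ici] at ht
    exact ((hd t (by linarith [Set.mem_Ioi.1 ht])).differentiableAt).differentiableWithinAt
  · intro t ht
    rw [interior_Ici] at ht
    have ht1 : (1:ℝ) < t := ht
    have ht0 : (0:ℝ) < t := by linarith
    rw [(hd t ht0).deriv]
    have := Real.one_sub_inv_le_log_of_pos ht0
    have h5 : (t+1) * t⁻¹ = 1 + t⁻¹ := by field_simp
    rw [h5]; linarith

lemma two_mul_le_log {t : ℝ} (ht : 1 ≤ t) : 2*(t-1) ≤ (t+1) * Real.log t := by
  have := aux_mono (Set.mem_Ici.2 (le_refl (1:ℝ))) (Set.mem_Ici.2 ht) ht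
  simp [Real.log_one] at this
  linarith

lemma sq_log_ineq {x y : ℝ} (hx : 0 < x) (hy : 0 < y) :
    2*(x-y)^2 ≤ (x^2 - y^2) * (Real.log x - Real.log y) := by
  rcases le_total y x with h | h
  · obtain ⟨t, ht1, rfl⟩ : ∃ t, 1 ≤ t ∧ x = t*y :=
      ⟨x/y, (one_le_div hy).2 h, (div_mul_cancel₀ x hy.ne').symm⟩
    have ht0 : (0:ℝ) < t := by linarith
    rw [Real.log_mul ht0.ne' hy.ne']
    have h1 := two_mul_le_log ht1
    nlinarith [mul_le_mul_of_nonneg_left h1 (mul_nonneg (sq_nonneg y) (sub_nonneg.2 ht1))]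
  · obtain ⟨t, ht1, rfl⟩ : ∃ t, 1 ≤ t ∧ y = t*x :=
      ⟨y/x, (one_le_div hx).2 h, (div_mul_cancel₀ y hx.ne').symm⟩
    have ht0 : (0:ℝ) < t := by linarith
    rw [Real.log_mul ht0.ne' hx.ne']
    have h1 := two_mul_le_log ht1
    nlinarith [mul_le_mul_of_nonneg_left h1 (mul_nonneg (sq_nonneg x) (sub_nonneg.2 ht1))]

lemma log_sq_root {a b : ℝ} (ha : 0 < a) (hb : 0 < b) :
    4 * (Real.sqrt b - Real.sqrt a)^2 ≤ (b - a) * (Real.log b - Real.log a) := by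
  have hx : 0 < Real.sqrt b := Real.sqrt_pos.2 hb
  have hy : 0 < Real.sqrt a := Real.sqrt_pos.2 ha
  have h1 := sq_log_ineq hx hy
  rw [Real.sq_sqrt hb.le, Real.sq_sqrt ha.le] at h1
  have hlb : Real.log (Real.sqrt b) = Real.log b / 2 := Real.log_sqrt hb.le
  have hla : Real.log (Real.sqrt a) = Real.log a / 2 := Real.log_sqrt ha.le
  rw [hlb, hla] at h1
  linarith

lemma upwind_ineq {a b : ℝ} (q : ℝ) (ha : 0 < a) (hb : 0 < b) :
    q * (b - a) ≤ (if 0 ≤ q then b else a) * q * (Real.log b - Real.log a) := by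
  split_ifs with hq
  · have h0 := Real.log_le_sub_one_of_pos (div_pos ha hb)
    rw [Real.log_div ha.ne' hb.ne'] at h0
    have e : b * (a/b - 1) = a - b := by field_simp
    have h2 : b - a ≤ b * (Real.log b - Real.log a) := by
      nlinarith [mul_le_mul_of_nonneg_left h0 hb.le]
    calc q * (b - a) ≤ q * (b * (Real.log b - Real.log a)) :=
          mul_le_mul_of_nonneg_left h2 hq
      _ = b * q * (Real.log b - Real.log a) := by ring
  · push_neg at hq
    have h0 := Real.log_le_sub_one_of_pos (div_pos hb ha)
    rw [Real.log_div hb.ne' ha.ne'] at h0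
    have e : a * (b/a - 1) = b - a := by field_simp
    have h2 : a * (Real.log b - Real.log a) ≤ b - a := by
      nlinarith [mul_le_mul_of_nonneg_left h0 ha.le]
    calc q * (b - a) ≤ q * (a * (Real.log b - Real.log a)) := by
          nlinarith [mul_le_mul_of_nonpos_left h2 hq.le]
      _ = a * q * (Real.log b - Real.log a) := by ring

lemma entropy_convex {a b : ℝ} (ha : 0 < a) (hb : 0 ≤ b) :
    a * (Real.log a - 1) - b * (Real.log b - 1) ≤ (a - b) * Real.log a := by
  rcases eq_or_lt_of_le hb with h | hb
  · rw [← h]; nlinarith [ha]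
  · have h0 := Real.log_le_sub_one_of_pos (div_pos ha hb)
    rw [Real.log_div ha.ne' hb.ne'] at h0
    have e : b * (a/b - 1) = a - b := by field_simp
    nlinarith [mul_le_mul_of_nonneg_left h0 hb.le]

variable {d : ℕ}

lemma mK_nonneg (M : Fin d → ℕ) : 0 ≤ mK M :=
  Finset.prod_nonneg (fun ℓ _ => inv_nonneg.2 (Nat.cast_nonneg _))

lemma tau_nonneg (M : Fin d → ℕ) (ℓ : Fin d) : 0 ≤ τ M ℓ :=
  mul_nonneg (mK_nonneg M) (sq_nonneg _)

lemma Bk_nonneg {κ : ℝ} (hκ : 0 < κ) {B : ℝ → ℝ} (hB : H2 B) {s : ℝ} (hs : 0 ≤ s) :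
    0 ≤ Bk κ B s :=
  mul_nonneg hκ.le (hB.2 _ (div_nonneg hs hκ.le)).1.le

lemma shift_shift (M : Fin d → ℕ) (K : Cell M) (ℓ : Fin d) (s t : ℤ) :
    shift M (shift M K ℓ s) ℓ t = shift M K ℓ (s + t) := by
  funext m
  by_cases h : m = ℓ
  · subst h
    simp [shift, Function.update_self]
    push_cast
    ring
  · simp [shift, Function.update_of_ne h]

lemma shift_zero (M : Fin d → ℕ) (K : Cell M) (ℓ : Fin d) : shift M K ℓ 0 = K := by
  funext m
  by_cases h : m = ℓ
  · subst h; simp [shift, Function.update_self]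
  · simp [shift, Function.update_of_ne h]

/-- Shifting by one as an equivalence of the cell set. -/
def shiftEquiv (M : Fin d → ℕ) (ℓ : Fin d) : Equiv (Cell M) (Cell M) where
  toFun K := shift M K ℓ 1
  invFun K := shift M K ℓ (-1)
  left_inv K := by
    show shift M (shift M K ℓ 1) ℓ (-1) = K
    rw [shift_shift]; norm_num [shift_zero]
  right_inv K := by
    show shift M (shift M K ℓ (-1)) ℓ 1 = K
    rw [shift_shift]; norm_num [shift_zero]

lemma flux_antisymm (M : Fin d → ℕ) (κ : ℝ) (B : ℝ → ℝ) (u p : Cell M → ℝ)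
    (ℓ : Fin d) (K L : Cell M) :
    flux M κ B u p ℓ L K = - flux M κ B u p ℓ K L := by
  unfold flux upw
  have habs : |p K - p L| = |p L - p K| := abs_sub_comm _ _
  rcases lt_trichotomy (p L - p K) 0 with h | h | h
  · rw [if_neg (not_le.2 h), if_pos (by linarith), habs]; ring
  · have hpe : p K = p L := by linarith
    rw [hpe]; ring_nf
  · rw [if_pos h.le, if_neg (by intro hc; linarith), habs]; ring

lemma sum_fluxSum_mul (M : Fin d → ℕ) [∀ ℓ, NeZero (M ℓ)] (κ : ℝ) (B : ℝ → ℝ)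
    (u p φ : Cell M → ℝ) :
    ∑ K : Cell M, fluxSum M κ B u p K * φ K
      = ∑ K : Cell M, ∑ ℓ : Fin d,
          flux M κ B u p ℓ K (shift M K ℓ 1) * (φ K - φ (shift M K ℓ 1)) := by
  have key : ∀ ℓ : Fin d,
      ∑ K : Cell M, flux M κ B u p ℓ K (shift M K ℓ (-1)) * φ K
        = ∑ K : Cell M, -(flux M κ B u p ℓ K (shift M K ℓ 1) * φ (shift M K ℓ 1)) := by
    intro ℓ
    rw [← Equiv.sum_comp (shiftEquiv M ℓ)
      (fun K => flux M κ B u p ℓ K (shift M K ℓ (-1)) * φ K)]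
    refine Finset.sum_congr rfl fun K _ => ?_
    have h1 : shift M (shift M K ℓ 1) ℓ (-1) = K := (shiftEquiv M ℓ).left_inv K
    show flux M κ B u p ℓ (shift M K ℓ 1) (shift M (shift M K ℓ 1) ℓ (-1))
        * φ (shift M K ℓ 1) = _
    rw [h1, flux_antisymm]
    ring
  unfold fluxSum
  simp_rw [Finset.sum_mul, add_mul, Finset.sum_add_distrib, mul_sub,
    Finset.sum_sub_distrib]
  rw [Finset.sum_comm (γ := Cell M) (f := fun K ℓ =>
    flux M κ B u p ℓ K (shift M K ℓ (-1)) * φ K)]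
  simp_rw [key]
  rw [Finset.sum_comm]
  simp only [sub_eq_add_neg, Finset.sum_neg_distrib]
  congr 1
  congr 1
  exact Finset.sum_comm

lemma edge_ineq (M : Fin d → ℕ) (ℓ : Fin d) {κ : ℝ} (hκ : 0 < κ) {B : ℝ → ℝ}
    (hB : H2 B) (u p : Cell M → ℝ) (K L : Cell M)
    (ha : 0 < u K) (hb : 0 < u L) :
    4 * (τ M ℓ * Bk κ B |p L - p K| * (Real.sqrt (u L) - Real.sqrt (u K)) ^ 2)
      + τ M ℓ * (p L - p K) * (u L - u K)
      ≤ flux M κ B u p ℓ K L * (Real.log (u K) - Real.log (u L)) := by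
  have hτ := tau_nonneg M ℓ
  have hBk : 0 ≤ Bk κ B |p L - p K| := Bk_nonneg hκ hB (abs_nonneg _)
  have h1 := log_sq_root ha hb
  have h2 := upwind_ineq (a := u K) (b := u L) (p L - p K) ha hb
  have h3 := mul_le_mul_of_nonneg_left h1 (mul_nonneg hτ hBk)
  have h4 := mul_le_mul_of_nonneg_left h2 hτ
  unfold flux upw
  nlinarith [h3, h4]

end Aux

/-- discrete Boltzmann entropy inequality. -/
theorem discrete_boltzmann_entropy_inequality {d n : ℕ} (M : Fin d → ℕ)
    [∀ ℓ, NeZero (M ℓ)]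
    (κ Δt : ℝ) (hκ : 0 < κ) (hΔt : 0 < Δt)
    (B : ℝ → ℝ) (hB : H2 B)
    (uprev u p : Fin n → Cell M → ℝ)
    (hprev : ∀ i K, 0 ≤ uprev i K) (hpos : ∀ i K, 0 < u i K)
    (hstep : ∀ i, Step M κ Δt B (uprev i) (u i) (p i)) :
    (1/Δt) * (HB M u - HB M uprev) + PB M κ B u p ≤ - Xc M u p := by
  classical
  set T := ∑ i, ∑ K : Cell M, fluxSum M κ B (u i) (p i) K * Real.log (u i K) with hT
  have claim1 : (1/Δt) * (HB M u - HB M uprev) ≤ -T := by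
    have h1 : HB M u - HB M uprev
        = ∑ i, ∑ K : Cell M, mK M * (u i K * (Real.log (u i K) - 1)
            - uprev i K * (Real.log (uprev i K) - 1)) := by
      unfold HB
      rw [← Finset.sum_sub_distrib]
      refine Finset.sum_congr rfl fun i _ => ?_
      rw [← Finset.sum_sub_distrib]
      refine Finset.sum_congr rfl fun K _ => ?_
      ring
    calc (1/Δt) * (HB M u - HB M uprev)
        = ∑ i, ∑ K : Cell M, (1/Δt) * (mK M * (u i K * (Real.log (u i K) - 1)
            - uprev i K * (Real.log (uprev i K) - 1))) := by
          rw [h1, Finset.mul_sum]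
          simp_rw [Finset.mul_sum]
      _ ≤ ∑ i, ∑ K : Cell M, -(fluxSum M κ B (u i) (p i) K * Real.log (u i K)) := by
          refine Finset.sum_le_sum fun i _ => Finset.sum_le_sum fun K _ => ?_
          have hconv := entropy_convex (hpos i K) (hprev i K)
          have hstepK := hstep i K
          have hf : fluxSum M κ B (u i) (p i) K
              = -(mK M * (u i K - uprev i K) / Δt) := by linarith
          rw [hf]
          have h2 : (1/Δt) * (mK M * (u i K * (Real.log (u i K) - 1)
                - uprev i K * (Real.log (uprev i K) - 1)))
              ≤ (1/Δt) * (mK M * ((u i K - uprev i K) * Real.log (u i K))) :=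
            mul_le_mul_of_nonneg_left
              (mul_le_mul_of_nonneg_left hconv (mK_nonneg M)) (by positivity)
          calc (1/Δt) * (mK M * (u i K * (Real.log (u i K) - 1)
                - uprev i K * (Real.log (uprev i K) - 1)))
              ≤ (1/Δt) * (mK M * ((u i K - uprev i K) * Real.log (u i K))) := h2
            _ = -(-(mK M * (u i K - uprev i K) / Δt) * Real.log (u i K)) := by ring
      _ = -T := by rw [hT, ← Finset.sum_neg_distrib]; simp [Finset.sum_neg_distrib]
  have claim2 : PB M κ B u p + Xc M u p ≤ T := by
    have hTe : T = ∑ i, ∑ K : Cell M, ∑ ℓ : Fin d,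
        flux M κ B (u i) (p i) ℓ K (shift M K ℓ 1)
          * (Real.log (u i K) - Real.log (u i (shift M K ℓ 1))) := by
      rw [hT]
      exact Finset.sum_congr rfl fun i _ =>
        sum_fluxSum_mul M κ B (u i) (p i) (fun K => Real.log (u i K))
    rw [hTe]
    unfold PB Xc
    rw [Finset.mul_sum]
    simp_rw [Finset.mul_sum]
    rw [← Finset.sum_add_distrib]
    refine Finset.sum_le_sum fun i _ => ?_
    rw [← Finset.sum_add_distrib]
    refine Finset.sum_le_sum fun K _ => ?_
    rw [← Finset.sum_add_distrib]
    refine Finset.sum_le_sum fun ℓ _ => ?_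
    exact edge_ineq M ℓ hκ hB (u i) (p i) K _ (hpos i K) (hpos i _)
  linarith

end SG
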